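/- If P and Q are disjoint lattice polytopes contained in the hypercube [0,k]^d, then the Euclidean distance between P and Q is at least 1/(k^{2d−1} · (√d)^{3d+2}). -/

import Mathlib

/-- A lattice (d,k)-polytope: the convex hull of a finite nonempty set of integer
points contained in the hypercube [0,k]^d. -/
def IsLatticePolytope (d k : ℕ) (P : Set (EuclideanSpace ℝ (Fin d))) : Prop :=
  ∃ V : Finset (EuclideanSpace ℝ (Fin d)), V.Nonempty ∧
    (∀ v ∈ V, ∀ i, (∃ z : ℤ, v i = z) ∧ 0 ≤ v i ∧ v i ≤ k) ∧
    P = convexHull ℝ (V : Set (EuclideanSpace ℝ (Fin d)))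

section AuxLemmas

open Finset RealInnerProductSpace

private lemma inner_formula {d : ℕ} (x y : EuclideanSpace ℝ (Fin d)) :
    ⟪x, y⟫ = ∑ i, x i * y i := by
  simp [PiLp.inner_apply, RCLike.inner_apply]
  exact Finset.sum_congr rfl fun _ _ => mul_comm _ _

private lemma inner_int {d : ℕ} (x y : EuclideanSpace ℝ (Fin d))
    (hx : ∀ i, ∃ z : ℤ, x i = z) (hy : ∀ i, ∃ z : ℤ, y i = z) :
    ∃ z : ℤ, ⟪x, y⟫ = z := by
  choose zx hzx using hx
  choose zy hzy using hy
  exact ⟨∑ i, zx i * zy i, by simp [inner_formula, hzx, hzy]⟩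

private lemma inner_abs_le {d : ℕ} (c : ℝ) (hc : 0 ≤ c) (x y : EuclideanSpace ℝ (Fin d))
    (hx : ∀ i, |x i| ≤ c) (hy : ∀ i, |y i| ≤ c) :
    |⟪x, y⟫| ≤ d * c^2 := by
  rw [inner_formula]
  calc |∑ i, x i * y i| ≤ ∑ i, |x i * y i| := Finset.abs_sum_le_sum_abs _ _
    _ ≤ ∑ _i : Fin d, c * c := by
        refine Finset.sum_le_sum fun i _ => ?_
        rw [abs_mul]
        exact mul_le_mul (hx i) (hy i) (abs_nonneg _) hc
    _ = d * c^2 := by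
        rw [Finset.sum_const, Finset.card_univ, Fintype.card_fin, nsmul_eq_mul]; ring

set_option maxHeartbeats 1000000 in
private lemma core {d k : ℕ} (hd : 1 ≤ d) (hk : 1 ≤ k)
    (T : Finset (EuclideanSpace ℝ (Fin d)))
    (hT : ∀ t ∈ T, ∀ i, (∃ z : ℤ, t i = z) ∧ |t i| ≤ (k : ℝ))
    (v : EuclideanSpace ℝ (Fin d))
    (hv : v ∈ convexHull ℝ (T : Set (EuclideanSpace ℝ (Fin d))))
    (hv0 : v ≠ 0)
    (hkey : ∀ t ∈ T, ‖v‖ ^ 2 ≤ ⟪v, t⟫) :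
    1 / (((d - 1).factorial : ℝ) * (4 * (k : ℝ) ^ 2 * d) ^ (d - 1)) ≤ ‖v‖ ^ 2 := by
  classical
  rw [Finset.convexHull_eq] at hv
  obtain ⟨w, hw0, hw1, hwc⟩ := hv
  rw [Finset.centerMass_eq_of_sum_1 _ _ hw1] at hwc
  simp only [id] at hwc
  -- restrict to the support
  set S : Finset (EuclideanSpace ℝ (Fin d)) := T.filter (fun y => w y ≠ 0) with hSdef
  have hsub : S ⊆ T := Finset.filter_subset _ _
  have hsumS : ∑ y ∈ S, w y = 1 := by
    rw [hSdef, Finset.sum_filter_ne_zero]; exact hw1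
  have hvS : ∑ y ∈ S, w y • y = v := by
    rw [hSdef, Finset.sum_filter_of_ne]
    · exact hwc
    · intro y _ h hwy
      exact h (by rw [hwy, zero_smul])
  have hSne : S.Nonempty := by
    rcases Finset.eq_empty_or_nonempty S with h | h
    · exfalso; rw [h] at hsumS; simp at hsumS
    · exact h
  -- every point in the support satisfies the equality
  have hES : ∀ y ∈ S, ⟪v, y⟫ = ‖v‖ ^ 2 := by
    have hsum0 : ∑ y ∈ T, w y * (⟪v, y⟫ - ‖v‖ ^ 2) = 0 := by
      have h1 : ∑ y ∈ T, w y * ⟪v, y⟫ = ‖v‖ ^ 2 := by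
        have : ⟪v, ∑ y ∈ T, w y • y⟫ = ∑ y ∈ T, w y * ⟪v, y⟫ := by
          rw [inner_sum]
          exact Finset.sum_congr rfl fun y _ => real_inner_smul_right _ _ _
        rw [← this, hwc, real_inner_self_eq_norm_sq]
      calc ∑ y ∈ T, w y * (⟪v, y⟫ - ‖v‖ ^ 2)
          = ∑ y ∈ T, w y * ⟪v, y⟫ - (∑ y ∈ T, w y) * ‖v‖ ^ 2 := by
            rw [Finset.sum_mul, ← Finset.sum_sub_distrib]
            exact Finset.sum_congr rfl fun y _ => by ring
        _ = 0 := by rw [h1, hw1, one_mul, sub_self]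
    have hall := (Finset.sum_eq_zero_iff_of_nonneg fun y hy =>
      mul_nonneg (hw0 y hy) (by linarith [hkey y hy])).1 hsum0
    intro y hy
    have hyT : y ∈ T := hsub hy
    have hwy : w y ≠ 0 := (Finset.mem_filter.1 hy).2
    have := hall y hyT
    rcases mul_eq_zero.1 this with h | h
    · exact absurd h hwy
    · linarith
  obtain ⟨w₀, hw₀S⟩ := hSne
  have hw₀T : w₀ ∈ T := hsub hw₀S
  set DS : Set (EuclideanSpace ℝ (Fin d)) := (fun y => y - w₀) '' (S : Set _) with hDSdef
  set U := Submodule.span ℝ DS with hUdef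
  have hUle : U ≤ (ℝ ∙ v)ᗮ := by
    rw [hUdef]
    refine Submodule.span_le.2 ?_
    rintro u ⟨y, hy, rfl⟩
    refine Submodule.mem_orthogonal_singleton_iff_inner_right.2 ?_
    rw [inner_sub_right, hES y hy, hES w₀ hw₀S, sub_self]
  have horthU : ∀ u ∈ U, ⟪v, u⟫ = 0 := fun u hu =>
    Submodule.mem_orthogonal_singleton_iff_inner_right.1 (hUle hu)
  have hvU : v - w₀ ∈ U := by
    have hrw : v - w₀ = ∑ y ∈ S, w y • (y - w₀) := by
      simp only [smul_sub]
      rw [Finset.sum_sub_distrib, hvS, ← Finset.sum_smul, hsumS, one_smul]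
    rw [hrw]
    exact Submodule.sum_mem _ fun y hy =>
      Submodule.smul_mem _ _ (Submodule.subset_span ⟨y, hy, rfl⟩)
  have hfr : Module.finrank ℝ U ≤ d - 1 := by
    have h2 : Module.finrank ℝ (ℝ ∙ v) = 1 := finrank_span_singleton hv0
    have h3 := Submodule.finrank_add_finrank_orthogonal (K := ℝ ∙ v)
    have h4 : Module.finrank ℝ (EuclideanSpace ℝ (Fin d)) = d := finrank_euclideanSpace_fin
    have h5 := Submodule.finrank_mono hUle
    omega
  -- extract a basis of U from DS
  obtain ⟨bs, hbsDS, hbspan, hbind⟩ := exists_linearIndependent ℝ DS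
  have hDSfin : DS.Finite := by rw [hDSdef]; exact (S.finite_toSet.image _)
  have hbsfin : bs.Finite := hDSfin.subset hbsDS
  haveI : Fintype bs := hbsfin.fintype
  have hcard : Fintype.card bs ≤ d - 1 := by
    have h1 : Module.finrank ℝ (Submodule.span ℝ bs) = bs.toFinset.card :=
      finrank_span_set_eq_card hbind
    rw [hbspan, ← hUdef] at h1
    rw [Set.toFinset_card] at h1
    omega
  -- coordinates
  have hvb : v - w₀ ∈ Submodule.span ℝ (Set.range ((↑) : bs → EuclideanSpace ℝ (Fin d))) := by
    rw [Subtype.range_coe, hbspan, ← hUdef]; exact hvU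
  obtain ⟨μ, hμ⟩ := Submodule.mem_span_range_iff_exists_fun ℝ |>.1 hvb
  have hveq : v = w₀ + ∑ i : bs, μ i • (i : EuclideanSpace ℝ (Fin d)) := by
    rw [hμ]; abel
  -- the Gram matrix
  set G : Matrix bs bs ℝ :=
    Matrix.of fun j l : bs => ⟪(j : EuclideanSpace ℝ (Fin d)), (l : EuclideanSpace ℝ (Fin d))⟫
    with hGdef
  have hbsU : ∀ j : bs, (j : EuclideanSpace ℝ (Fin d)) ∈ U := fun j => by
    rw [hUdef]; exact Submodule.subset_span (hbsDS j.2)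
  have hji : ∀ j : bs, ⟪(j : EuclideanSpace ℝ (Fin d)), v⟫ = 0 := fun j => by
    rw [real_inner_comm]; exact horthU _ (hbsU j)
  have hsys : ∀ j : bs, (∑ l : bs, G j l * μ l) = -⟪(j : EuclideanSpace ℝ (Fin d)), w₀⟫ := by
    intro j
    have h0 := hji j
    rw [hveq, inner_add_right, inner_sum] at h0
    simp only [real_inner_smul_right] at h0
    have : ∑ l : bs, G j l * μ l
        = ∑ l : bs, μ l * ⟪(j : EuclideanSpace ℝ (Fin d)), (l : EuclideanSpace ℝ (Fin d))⟫ :=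
      Finset.sum_congr rfl fun l _ => by rw [hGdef, Matrix.of_apply, mul_comm]
    rw [this]
    linarith
  have hdet : G.det ≠ 0 := by
    intro h0
    obtain ⟨x, hx0, hxv⟩ := Matrix.exists_mulVec_eq_zero_iff.2 h0
    have hsymm : ∀ j l : bs, G j l = G l j := fun j l => by
      rw [hGdef, Matrix.of_apply, Matrix.of_apply, real_inner_comm]
    have hcol : ∀ l : bs, ∑ j : bs, x j * G j l = 0 := by
      intro l
      have hl := congrFun hxv l
      rw [Matrix.mulVec, dotProduct] at hl
      calc ∑ j : bs, x j * G j l = ∑ j : bs, G l j * x j :=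
            Finset.sum_congr rfl fun j _ => by rw [mul_comm, hsymm]
        _ = 0 := hl
    have hz : (∑ i : bs, x i • (i : EuclideanSpace ℝ (Fin d))) = 0 := by
      have hin : ⟪∑ i : bs, x i • (i : EuclideanSpace ℝ (Fin d)),
          ∑ i : bs, x i • (i : EuclideanSpace ℝ (Fin d))⟫ = 0 := by
        rw [inner_sum]
        have : ∀ l : bs, ⟪∑ i : bs, x i • (i : EuclideanSpace ℝ (Fin d)),
            x l • (l : EuclideanSpace ℝ (Fin d))⟫ = x l * (∑ j : bs, x j * G j l) := by
          intro l
          rw [real_inner_smul_right, sum_inner]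
          congr 1
          refine Finset.sum_congr rfl fun j _ => ?_
          rw [real_inner_smul_left, hGdef, Matrix.of_apply]
        simp only [this]
        exact Finset.sum_eq_zero fun l _ => by rw [hcol l, mul_zero]
      exact inner_self_eq_zero.1 hin
    have := Fintype.linearIndependent_iff.1 hbind x hz
    exact hx0 (funext this)
  -- integrality data
  have hbint : ∀ j : bs, ∀ i, ∃ z : ℤ, (j : EuclideanSpace ℝ (Fin d)) i = z := by
    intro j i
    obtain ⟨y, hyS, hyeq⟩ := hbsDS j.2
    obtain ⟨zy, hzy⟩ := (hT y (hsub hyS) i).1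
    obtain ⟨z0, hz0⟩ := (hT w₀ hw₀T i).1
    refine ⟨zy - z0, ?_⟩
    rw [← hyeq]
    show y i - w₀ i = ((zy - z0 : ℤ) : ℝ)
    rw [hzy, hz0]; push_cast; ring
  have hbabs : ∀ j : bs, ∀ i, |(j : EuclideanSpace ℝ (Fin d)) i| ≤ 2 * k := by
    intro j i
    obtain ⟨y, hyS, hyeq⟩ := hbsDS j.2
    have h1 := (hT y (hsub hyS) i).2
    have h2 := (hT w₀ hw₀T i).2
    rw [← hyeq]
    show |y i - w₀ i| ≤ 2 * (k : ℝ)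
    calc |y i - w₀ i| ≤ |y i| + |w₀ i| := abs_sub _ _
      _ ≤ 2 * (k : ℝ) := by linarith
  have hw₀int : ∀ i, ∃ z : ℤ, w₀ i = z := fun i => (hT w₀ hw₀T i).1
  have horthvw : ⟪v, v - w₀⟫ = 0 := horthU _ hvU
  -- integer entries
  have hGint : ∀ j l : bs, ∃ z : ℤ, G j l = z := fun j l => by
    rw [hGdef, Matrix.of_apply]; exact inner_int _ _ (hbint j) (hbint l)
  choose Gz hGz using hGint
  have hGmap : G = (Matrix.of Gz).map (Int.cast : ℤ → ℝ) := by
    ext j l; exact hGz j l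
  have heint : ∀ j : bs, ∃ z : ℤ, ⟪(j : EuclideanSpace ℝ (Fin d)), w₀⟫ = z := fun j =>
    inner_int _ _ (hbint j) hw₀int
  choose ez hez using heint
  obtain ⟨n₀, hn₀⟩ := inner_int w₀ w₀ hw₀int hw₀int
  set Dz : ℤ := (Matrix.of Gz).det with hDzdef
  have hdetcast : G.det = (Dz : ℝ) := by
    rw [hGmap, hDzdef]
    exact ((RingHom.map_det (Int.castRingHom ℝ) (Matrix.of Gz)).symm : _)
  have hDz0 : Dz ≠ 0 := fun h => hdet (by rw [hdetcast, h, Int.cast_zero])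
  -- Cramer's rule
  set mz : bs → ℤ := (Matrix.of Gz).adjugate.mulVec (fun j => -(ez j)) with hmzdef
  have hGmulvec : G.mulVec μ = fun j : bs => -⟪(j : EuclideanSpace ℝ (Fin d)), w₀⟫ := by
    funext j; rw [Matrix.mulVec, dotProduct]; exact hsys j
  have hcram : ∀ l : bs, (Dz : ℝ) * μ l = (mz l : ℝ) := by
    have h1 : G.adjugate.mulVec (G.mulVec μ) = G.det • μ := by
      rw [Matrix.mulVec_mulVec, Matrix.adjugate_mul, Matrix.smul_mulVec, Matrix.one_mulVec]
    intro l
    have h2 := congrFun h1 l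
    rw [hGmulvec] at h2
    have hadj : G.adjugate = ((Matrix.of Gz).adjugate).map (Int.cast : ℤ → ℝ) := by
      rw [hGmap]
      have := RingHom.map_adjugate (Int.castRingHom ℝ) (Matrix.of Gz)
      exact this.symm
    have hlhs : (G.adjugate.mulVec fun j : bs => -⟪(j : EuclideanSpace ℝ (Fin d)), w₀⟫) l
        = (mz l : ℝ) := by
      rw [hadj, hmzdef]
      simp only [Matrix.mulVec, dotProduct, Matrix.map_apply]
      push_cast
      exact Finset.sum_congr rfl fun j _ => by rw [hez j]
    rw [hlhs, hdetcast] at h2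
    have h3 := h2.symm
    rw [Pi.smul_apply, smul_eq_mul] at h3
    exact h3
  -- value of the squared norm
  have hnormsq : ‖v‖ ^ 2 = ⟪w₀, w₀⟫ + ∑ l : bs, μ l * ⟪(l : EuclideanSpace ℝ (Fin d)), w₀⟫ := by
    have h1 : ‖v‖ ^ 2 = ⟪v, w₀⟫ := by
      rw [← real_inner_self_eq_norm_sq]
      calc ⟪v, v⟫ = ⟪v, w₀ + (v - w₀)⟫ := by rw [add_sub_cancel]
        _ = ⟪v, w₀⟫ + ⟪v, v - w₀⟫ := inner_add_right _ _ _
        _ = ⟪v, w₀⟫ := by rw [horthvw, add_zero]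
    rw [h1]
    conv_lhs => rw [hveq]
    rw [inner_add_left, sum_inner]
    congr 1
    exact Finset.sum_congr rfl fun l _ => real_inner_smul_left _ _ _
  set Nz : ℤ := Dz * n₀ + ∑ l : bs, mz l * ez l with hNzdef
  have hDN : (Dz : ℝ) * ‖v‖ ^ 2 = (Nz : ℝ) := by
    rw [hnormsq, mul_add, Finset.mul_sum, hNzdef]
    push_cast
    rw [hn₀]
    congr 1
    refine Finset.sum_congr rfl fun l _ => ?_
    rw [hez l, show (Dz : ℝ) * (μ l * (ez l : ℝ)) = ((Dz : ℝ) * μ l) * (ez l : ℝ) by ring,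
      hcram l]
  have hvpos : 0 < ‖v‖ ^ 2 := pow_pos (norm_pos_iff.2 hv0) 2
  have hNz0 : Nz ≠ 0 := by
    intro h
    rw [h, Int.cast_zero] at hDN
    have : (Dz : ℝ) = 0 := by
      rcases mul_eq_zero.1 hDN with h' | h'
      · exact h'
      · linarith
    exact hDz0 (by exact_mod_cast this)
  have h1le : (1 : ℝ) ≤ |(Nz : ℝ)| := by
    have := Int.one_le_abs hNz0
    calc (1:ℝ) = ((1:ℤ):ℝ) := by norm_num
      _ ≤ ((|Nz| : ℤ) : ℝ) := by exact_mod_cast this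
      _ = |(Nz : ℝ)| := by push_cast; ring
  have hDzpos : 0 < |(Dz : ℝ)| := by
    rw [abs_pos]; exact_mod_cast hDz0
  have hvge : 1 / |(Dz : ℝ)| ≤ ‖v‖ ^ 2 := by
    rw [div_le_iff₀ hDzpos]
    calc (1:ℝ) ≤ |(Nz : ℝ)| := h1le
      _ = |(Dz : ℝ)| * ‖v‖ ^ 2 := by rw [← hDN, abs_mul, abs_of_pos hvpos]
      _ = ‖v‖ ^ 2 * |(Dz : ℝ)| := mul_comm _ _
  -- bound the determinant
  set r := Fintype.card bs with hr
  have hentry : ∀ j l : bs, |G j l| ≤ 4 * (k : ℝ) ^ 2 * d := by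
    intro j l
    have h := inner_abs_le (2 * (k : ℝ)) (by positivity) _ _ (hbabs j) (hbabs l)
    calc |G j l| = |⟪(j : EuclideanSpace ℝ (Fin d)), (l : EuclideanSpace ℝ (Fin d))⟫| := by
          rw [hGdef, Matrix.of_apply]
      _ ≤ d * (2 * (k : ℝ)) ^ 2 := h
      _ = 4 * (k : ℝ) ^ 2 * d := by ring
  have hdetle : |G.det| ≤ (r.factorial : ℝ) * (4 * (k : ℝ) ^ 2 * d) ^ r := by
    have h := Matrix.det_le (A := G) (abv := AbsoluteValue.abs) (x := 4 * (k : ℝ) ^ 2 * d)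
      (fun i j => by simpa using hentry i j)
    simpa [nsmul_eq_mul, hr] using h
  have hone : (1 : ℝ) ≤ (k : ℝ) := by exact_mod_cast hk
  have honed : (1 : ℝ) ≤ (d : ℝ) := by exact_mod_cast hd
  have hx1 : (1 : ℝ) ≤ 4 * (k : ℝ) ^ 2 * d := by nlinarith
  have hmono : (r.factorial : ℝ) * (4 * (k : ℝ) ^ 2 * d) ^ r
      ≤ ((d - 1).factorial : ℝ) * (4 * (k : ℝ) ^ 2 * d) ^ (d - 1) := by
    have h1 : (r.factorial : ℝ) ≤ ((d - 1).factorial : ℝ) := by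
      exact_mod_cast Nat.factorial_le hcard
    have h2 : (4 * (k : ℝ) ^ 2 * d) ^ r ≤ (4 * (k : ℝ) ^ 2 * d) ^ (d - 1) :=
      pow_le_pow_right₀ hx1 hcard
    exact mul_le_mul h1 h2 (by positivity) (by positivity)
  have hDzle : |(Dz : ℝ)| ≤ ((d - 1).factorial : ℝ) * (4 * (k : ℝ) ^ 2 * d) ^ (d - 1) := by
    rw [← hdetcast]
    exact le_trans hdetle hmono
  calc 1 / (((d - 1).factorial : ℝ) * (4 * (k : ℝ) ^ 2 * d) ^ (d - 1)) ≤ 1 / |(Dz : ℝ)| :=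
        one_div_le_one_div_of_le hDzpos hDzle
    _ ≤ ‖v‖ ^ 2 := hvge

private lemma nat_arith (d k : ℕ) (hd : 1 ≤ d) (hk : 1 ≤ k) :
    (d - 1).factorial * (4 * k ^ 2 * d) ^ (d - 1) ≤ k ^ (4 * d - 2) * d ^ (3 * d + 2) := by
  have h4 : 4 ^ (d - 1) ≤ d ^ (d + 4) := by
    rcases le_or_gt 4 d with h | h
    · calc (4:ℕ) ^ (d-1) ≤ d ^ (d-1) := Nat.pow_le_pow_left h _
        _ ≤ d ^ (d+4) := Nat.pow_le_pow_right (by omega) (by omega)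
    · interval_cases d <;> norm_num
  have hfac : (d - 1).factorial ≤ d ^ (d - 1) :=
    le_trans (Nat.factorial_le_pow _) (Nat.pow_le_pow_left (by omega) _)
  calc (d - 1).factorial * (4 * k ^ 2 * d) ^ (d - 1)
      = (d - 1).factorial * (4 ^ (d-1) * (k^2) ^ (d-1) * d ^ (d-1)) := by
        rw [mul_pow, mul_pow]
    _ ≤ d ^ (d-1) * (d ^ (d+4) * (k^2) ^ (d-1) * d ^ (d-1)) :=
        Nat.mul_le_mul hfac (Nat.mul_le_mul_right _ (Nat.mul_le_mul_right _ h4))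
    _ = (k ^ (2 * (d-1))) * d ^ ((d-1) + ((d+4) + (d-1))) := by
        rw [pow_add, pow_add, ← pow_mul]; ring
    _ ≤ k ^ (4*d-2) * d ^ (3*d+2) := by
        have e1 : (d-1) + ((d+4) + (d-1)) = 3*d+2 := by omega
        rw [e1]
        exact Nat.mul_le_mul (Nat.pow_le_pow_right hk (by omega)) le_rfl

private lemma real_arith (d k : ℕ) (hd : 1 ≤ d) (hk : 1 ≤ k) :
    ((d - 1).factorial : ℝ) * (4 * (k:ℝ) ^ 2 * d) ^ (d - 1)
      ≤ ((k:ℝ) ^ (2*d-1) * Real.sqrt d ^ (3*d+2)) ^ 2 := by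
  have h1 : ((k:ℝ) ^ (2*d-1) * Real.sqrt d ^ (3*d+2))^2
      = (k:ℝ) ^ (4*d-2) * (d:ℝ) ^ (3*d+2) := by
    rw [mul_pow]
    congr 1
    · rw [← pow_mul]; congr 1; omega
    · rw [← pow_mul, mul_comm, pow_mul, Real.sq_sqrt (by positivity : (0:ℝ) ≤ (d:ℝ))]
  rw [h1]
  calc ((d - 1).factorial : ℝ) * (4 * (k:ℝ) ^ 2 * d) ^ (d - 1)
      = (((d - 1).factorial * (4 * k ^ 2 * d) ^ (d - 1) : ℕ) : ℝ) := by push_cast; ring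
    _ ≤ ((k ^ (4 * d - 2) * d ^ (3 * d + 2) : ℕ) : ℝ) := by
        exact_mod_cast nat_arith d k hd hk
    _ = (k:ℝ) ^ (4*d-2) * (d:ℝ) ^ (3*d+2) := by push_cast; ring

end AuxLemmas

open Finset RealInnerProductSpace

open Pointwise

/-- If P and Q are disjoint lattice (d,k)-polytopes, then
d(P,Q) ≥ 1/(k^(2d-1) · (√d)^(3d+2)). -/
theorem stmt_1 (d k : ℕ) (hd : 1 ≤ d) (hk : 1 ≤ k)
    (P Q : Set (EuclideanSpace ℝ (Fin d)))
    (hP : IsLatticePolytope d k P) (hQ : IsLatticePolytope d k Q)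
    (hdisj : P ∩ Q = ∅) :
    ∀ p ∈ P, ∀ q ∈ Q,
      1 / ((k : ℝ) ^ (2 * d - 1) * Real.sqrt d ^ (3 * d + 2)) ≤ dist p q := by
  classical
  obtain ⟨VP, hVPne, hVPprop, hPdef⟩ := hP
  obtain ⟨VQ, hVQne, hVQprop, hQdef⟩ := hQ
  set T : Finset (EuclideanSpace ℝ (Fin d)) :=
    (VQ ×ˢ VP).image (fun pr => pr.1 - pr.2) with hTdef
  have hTset : (T : Set (EuclideanSpace ℝ (Fin d)))
      = (VQ : Set (EuclideanSpace ℝ (Fin d))) - (VP : Set (EuclideanSpace ℝ (Fin d))) := by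
    rw [hTdef, Finset.coe_image, Finset.coe_product]
    exact Set.sub_image_prod
  set C := convexHull ℝ (T : Set (EuclideanSpace ℝ (Fin d))) with hCdef
  have hCset : C = Q - P := by
    rw [hCdef, hTset, convexHull_sub, ← hPdef, ← hQdef]
  have hTne : T.Nonempty := (hVQne.product hVPne).image _
  have hCne : C.Nonempty := ⟨hTne.choose, subset_convexHull ℝ _ hTne.choose_spec⟩
  have hCcompact : IsCompact C := T.finite_toSet.isCompact_convexHull ℝ
  have hCconvex : Convex ℝ C := convex_convexHull ℝ _
  have h0C : (0 : EuclideanSpace ℝ (Fin d)) ∉ C := by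
    rw [hCset]
    intro h
    obtain ⟨q', hq', p', hp', hqp⟩ := Set.mem_sub.1 h
    have heq : q' = p' := by rwa [sub_eq_zero] at hqp
    have hmem : p' ∈ P ∩ Q := ⟨hp', heq ▸ hq'⟩
    rw [hdisj] at hmem
    exact hmem
  obtain ⟨v, hvC, hvmin⟩ :=
    exists_norm_eq_iInf_of_complete_convex hCne hCcompact.isComplete hCconvex 0
  have hvar := (norm_eq_iInf_iff_real_inner_le_zero hCconvex hvC).1 hvmin
  have hv0 : v ≠ 0 := fun h => h0C (h ▸ hvC)
  have hkey : ∀ t ∈ T, ‖v‖ ^ 2 ≤ ⟪v, t⟫ := by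
    intro t ht
    have htC : t ∈ C := subset_convexHull ℝ _ ht
    have h := hvar t htC
    have heq : ⟪(0 : EuclideanSpace ℝ (Fin d)) - v, t - v⟫ = ⟪v, t⟫ * (-1) + ‖v‖ ^ 2 := by
      rw [zero_sub, inner_neg_left, inner_sub_right, real_inner_self_eq_norm_sq]
      ring
    rw [heq] at h
    linarith
  have hT : ∀ t ∈ T, ∀ i, (∃ z : ℤ, t i = z) ∧ |t i| ≤ (k : ℝ) := by
    intro t ht i
    rw [hTdef] at ht
    obtain ⟨pr, hpr, rfl⟩ := Finset.mem_image.1 ht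
    obtain ⟨hq', hp'⟩ := Finset.mem_product.1 hpr
    obtain ⟨⟨zq, hzq⟩, hq0, hqk⟩ := hVQprop pr.1 hq' i
    obtain ⟨⟨zp, hzp⟩, hp0, hpk⟩ := hVPprop pr.2 hp' i
    constructor
    · refine ⟨zq - zp, ?_⟩
      show pr.1 i - pr.2 i = ((zq - zp : ℤ) : ℝ)
      rw [hzq, hzp]; push_cast; ring
    · show |pr.1 i - pr.2 i| ≤ (k : ℝ)
      rw [abs_le]
      constructor <;> linarith
  have hcore := core hd hk T hT v hvC hv0 hkey
  intro p hp q hq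
  have hqp : q - p ∈ C := by
    rw [hCset]; exact Set.sub_mem_sub hq hp
  have hle : ‖v‖ ≤ dist p q := by
    have h2 : (⨅ w : C, ‖(0 : EuclideanSpace ℝ (Fin d)) - (w : EuclideanSpace ℝ (Fin d))‖)
        ≤ ‖(0 : EuclideanSpace ℝ (Fin d)) - (q - p)‖ :=
      ciInf_le ⟨0, Set.forall_mem_range.2 fun _ => norm_nonneg _⟩
        (⟨q - p, hqp⟩ : C)
    rw [← hvmin] at h2
    rw [zero_sub, norm_neg, zero_sub, norm_neg] at h2
    rw [dist_eq_norm, norm_sub_rev]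
    simpa using h2
  have hεpos : (0:ℝ) < (k:ℝ) ^ (2*d-1) * Real.sqrt d ^ (3*d+2) := by
    have h1 : (0:ℝ) < k := by exact_mod_cast hk
    have h2 : (0:ℝ) < Real.sqrt d := Real.sqrt_pos.2 (by exact_mod_cast hd)
    positivity
  have hεsq : (1 / ((k:ℝ) ^ (2*d-1) * Real.sqrt d ^ (3*d+2))) ^ 2 ≤ ‖v‖ ^ 2 := by
    have harith := real_arith d k hd hk
    have hApos : (0:ℝ) < ((d-1).factorial : ℝ) * (4 * (k:ℝ) ^ 2 * d) ^ (d-1) := by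
      have h1 : (0:ℝ) < k := by exact_mod_cast hk
      have h2 : (0:ℝ) < d := by exact_mod_cast hd
      positivity
    calc (1 / ((k:ℝ) ^ (2*d-1) * Real.sqrt d ^ (3*d+2))) ^ 2
        = 1 / (((k:ℝ) ^ (2*d-1) * Real.sqrt d ^ (3*d+2)) ^ 2) := by
          rw [div_pow, one_pow]
      _ ≤ 1 / (((d-1).factorial : ℝ) * (4 * (k:ℝ) ^ 2 * d) ^ (d-1)) :=
          one_div_le_one_div_of_le hApos harith
      _ ≤ ‖v‖ ^ 2 := hcore
  have hfinal : 1 / ((k:ℝ) ^ (2*d-1) * Real.sqrt d ^ (3*d+2)) ≤ ‖v‖ := by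
    have hεnn : (0:ℝ) ≤ 1 / ((k:ℝ) ^ (2*d-1) * Real.sqrt d ^ (3*d+2)) := by positivity
    calc 1 / ((k:ℝ) ^ (2*d-1) * Real.sqrt d ^ (3*d+2))
        = Real.sqrt ((1 / ((k:ℝ) ^ (2*d-1) * Real.sqrt d ^ (3*d+2))) ^ 2) :=
          (Real.sqrt_sq hεnn).symm
      _ ≤ Real.sqrt (‖v‖ ^ 2) := Real.sqrt_le_sqrt hεsq
      _ = ‖v‖ := Real.sqrt_sq (norm_nonneg v)
  linarith
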